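/- arXiv:2207.04623 — 2 statements merged into one kernel-verified Lean document; each statement's English description precedes it below -/
import Mathlib

section
/- Let x, x̃ : ℝ → ℝ^d (with the Euclidean norm) and let f₁, f₂ : ℝ^d → ℝ^d be Lipschitz continuous with Lipschitz constants L₁ and L₂ respectively. Assume there are constants μ, η > 0 with ‖f₁(z) − f₂(z)‖ ≤ μ for all z ∈ ℝ^d. Let 0 = T₀ < T₁ < T₂ and T₁ ≤ t̆ ≤ T₂ with t̆ − T₁ ≤ η. Suppose x satisfies x(0) = x₀, x′(t) = f₁(x(t)) for t ∈ (0, T₁] and x′(t) = f₂(x(t)) for t ∈ (T₁, T₂], while x̃ satisfies x̃(0) = x₀, x̃′(t) = f₁(x̃(t)) for t ∈ (0, t̆] and x̃′(t) = f₂(x̃(t)) for t ∈ (t̆, T₂], and both x and x̃ are continuous on [0, T₂]. Then: ‖x(t) − x̃(t)‖ = 0 for t ∈ (0, T₁]; ‖x(t) − x̃(t)‖ ≤ μ (t − T₁) exp(max(L₁, L₂)(t − T₁)) for t ∈ (T₁, t̆]; and ‖x(t) − x̃(t)‖ ≤ μ η exp(L₂(t − t̆) + max(L₁, L₂) η) for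 t ∈ (t̆, T₂]. -/
open Set Filter Real Topology

/-- Proposition 1 (case t̆ ≥ T₁): comparison between the true switched system `x`
(switching from `f₁` to `f₂` at time `T₁`) and the auxiliary system `xt`
(switching at the approximate switching time `tb ≥ T₁`). -/
theorem switched_system_auxiliary_comparison
    {d : ℕ}
    (f₁ f₂ : EuclideanSpace ℝ (Fin d) → EuclideanSpace ℝ (Fin d))
    (x xt : ℝ → EuclideanSpace ℝ (Fin d))
    (x₀ : EuclideanSpace ℝ (Fin d))
    (L₁ L₂ μ η T₁ T₂ tb : ℝ)
    (hf₁ : ∀ a b, ‖f₁ a - f₁ b‖ ≤ L₁ * ‖a - b‖)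
    (hf₂ : ∀ a b, ‖f₂ a - f₂ b‖ ≤ L₂ * ‖a - b‖)
    (hμ : 0 < μ) (hη : 0 < η)
    (hdiff : ∀ z, ‖f₁ z - f₂ z‖ ≤ μ)
    (hT₁pos : 0 < T₁) (hT₁₂ : T₁ < T₂)
    (htb₁ : T₁ ≤ tb) (htb₂ : tb ≤ T₂) (htbη : tb - T₁ ≤ η)
    (hx0 : x 0 = x₀) (hxt0 : xt 0 = x₀)
    (hx1 : ∀ t ∈ Set.Ioc (0 : ℝ) T₁, HasDerivAt x (f₁ (x t)) t)
    (hx2 : ∀ t ∈ Set.Ioc T₁ T₂, HasDerivAt x (f₂ (x t)) t)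
    (hxt1 : ∀ t ∈ Set.Ioc (0 : ℝ) tb, HasDerivAt xt (f₁ (xt t)) t)
    (hxt2 : ∀ t ∈ Set.Ioc tb T₂, HasDerivAt xt (f₂ (xt t)) t)
    (hxc : ContinuousOn x (Set.Icc 0 T₂))
    (hxtc : ContinuousOn xt (Set.Icc 0 T₂)) :
    (∀ t ∈ Set.Ioc (0 : ℝ) T₁, ‖x t - xt t‖ = 0) ∧
    (∀ t ∈ Set.Ioc T₁ tb,
      ‖x t - xt t‖ ≤ μ * (t - T₁) * Real.exp (max L₁ L₂ * (t - T₁))) ∧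
    (∀ t ∈ Set.Ioc tb T₂,
      ‖x t - xt t‖ ≤ μ * η * Real.exp (L₂ * (t - tb) + max L₁ L₂ * η)) := by
  classical
  rcases eq_or_ne d 0 with hd | hd
  · subst hd
    have hzero : ∀ t, x t - xt t = (0 : EuclideanSpace ℝ (Fin 0)) :=
      fun t => Subsingleton.elim _ _
    refine ⟨fun t _ => by rw [hzero, norm_zero], fun t ht => ?_, fun t _ => ?_⟩
    · rw [hzero, norm_zero]
      exact mul_nonneg (mul_nonneg hμ.le (by linarith [ht.1])) (Real.exp_pos _).le
    · rw [hzero, norm_zero]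
      positivity
  · have hd1 : 0 < d := Nat.pos_of_ne_zero hd
    set i : Fin d := ⟨0, hd1⟩
    have hunit : ‖(EuclideanSpace.single i (1 : ℝ)) - 0‖ = 1 := by
      rw [sub_zero, EuclideanSpace.norm_single]; norm_num
    have hL₁ : 0 ≤ L₁ := by
      have h := hf₁ (EuclideanSpace.single i (1 : ℝ)) 0
      rw [hunit, mul_one] at h
      exact le_trans (norm_nonneg _) h
    have hL₂ : 0 ≤ L₂ := by
      have h := hf₂ (EuclideanSpace.single i (1 : ℝ)) 0
      rw [hunit, mul_one] at h
      exact le_trans (norm_nonneg _) h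
    have hmax : 0 ≤ max L₁ L₂ := le_trans hL₁ (le_max_left _ _)
    set K : NNReal := (max L₁ L₂).toNNReal with hKdef
    have hK : (K : ℝ) = max L₁ L₂ := Real.coe_toNNReal _ hmax
    set K₂ : NNReal := L₂.toNNReal with hK₂def
    have hK₂ : (K₂ : ℝ) = L₂ := Real.coe_toNNReal _ hL₂
    have hlip₁ : LipschitzWith K f₁ := by
      refine LipschitzWith.of_dist_le_mul fun a b => ?_
      rw [dist_eq_norm, dist_eq_norm, hK]
      exact (hf₁ a b).trans (mul_le_mul_of_nonneg_right (le_max_left _ _) (norm_nonneg _))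
    have hlip₂ : LipschitzWith K₂ f₂ := by
      refine LipschitzWith.of_dist_le_mul fun a b => ?_
      rw [dist_eq_norm, dist_eq_norm, hK₂]
      exact hf₂ a b
    -- Phase 1: x = xt on [0, T₁]
    have h1 : ∀ t ∈ Set.Icc (0 : ℝ) T₁, dist (x t) (xt t) ≤ 0 := by
      rintro t ⟨ht0, ht1⟩
      rcases eq_or_lt_of_le ht0 with h0 | ht0
    -- t = 0
      · rw [← h0, hx0, hxt0, dist_self]
      · have key : ∀ s ∈ Set.Ioo (0 : ℝ) t,
            dist (x t) (xt t) ≤ dist (x s) (xt s) * Real.exp ((K : ℝ) * (t - s)) := by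
          intro s hs
          have := dist_le_of_trajectories_ODE (v := fun _ y => f₁ y) (fun _ => hlip₁)
            (hxc.mono (Set.Icc_subset_Icc hs.1.le (by linarith)))
            (fun u hu => (hx1 u ⟨lt_of_lt_of_le hs.1 hu.1, le_trans hu.2.le ht1⟩).hasDerivWithinAt)
            (hxtc.mono (Set.Icc_subset_Icc hs.1.le (by linarith)))
            (fun u hu => (hxt1 u ⟨lt_of_lt_of_le hs.1 hu.1,
              le_trans hu.2.le (le_trans ht1 htb₁)⟩).hasDerivWithinAt)
            le_rfl
          exact this t ⟨hs.2.le, le_rfl⟩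
        have hmem : Set.Ioo (0 : ℝ) t ∈ 𝓝[>] (0 : ℝ) :=
          Ioo_mem_nhdsGT_of_mem ⟨le_rfl, ht0⟩
        have hle : 𝓝[>] (0 : ℝ) ≤ 𝓝[Set.Icc (0 : ℝ) T₂] (0 : ℝ) :=
          nhdsWithin_le_iff.mpr (Filter.mem_of_superset hmem
            (fun u hu => ⟨hu.1.le, by linarith [hu.2]⟩))
        have hx' : Filter.Tendsto x (𝓝[>] (0 : ℝ)) (𝓝 (x 0)) :=
          (hxc 0 ⟨le_rfl, by linarith⟩).mono_left hle
        have hxt' : Filter.Tendsto xt (𝓝[>] (0 : ℝ)) (𝓝 (xt 0)) :=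
          (hxtc 0 ⟨le_rfl, by linarith⟩).mono_left hle
        have hexp : Filter.Tendsto (fun s : ℝ => Real.exp ((K : ℝ) * (t - s)))
            (𝓝[>] (0 : ℝ)) (𝓝 (Real.exp ((K : ℝ) * (t - 0)))) :=
          ((Real.continuous_exp.comp
            (continuous_const.mul (continuous_const.sub continuous_id))).tendsto 0).mono_left
            nhdsWithin_le_nhds
        have hfin : dist (x t) (xt t) ≤ dist (x 0) (xt 0) * Real.exp ((K : ℝ) * (t - 0)) :=
          ge_of_tendsto ((hx'.dist hxt').mul hexp) (Filter.eventually_of_mem hmem key)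
        rw [hx0, hxt0, dist_self, zero_mul] at hfin
        exact hfin
    -- Phase 2
    have h2 : ∀ t ∈ Set.Icc T₁ tb,
        dist (x t) (xt t) ≤ gronwallBound 0 K (μ + 0) (t - T₁) := by
      apply dist_le_of_approx_trajectories_ODE (v := fun _ y => f₁ y)
        (f' := fun u => if u ≤ T₁ then f₁ (x u) else f₂ (x u))
        (g' := fun u => f₁ (xt u)) (fun _ => hlip₁)
        (hxc.mono (Set.Icc_subset_Icc hT₁pos.le htb₂))
      · intro u hu
        by_cases h : u ≤ T₁
        · have hu1 : u = T₁ := le_antisymm h hu.1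
          simp only [if_pos h]
          exact (hx1 u ⟨by rw [hu1]; exact hT₁pos, h⟩).hasDerivWithinAt
        · simp only [if_neg h]
          exact (hx2 u ⟨lt_of_not_ge h, le_trans hu.2.le htb₂⟩).hasDerivWithinAt
      · intro u hu
        by_cases h : u ≤ T₁
        · simp only [if_pos h, dist_self]; exact hμ.le
        · simp only [if_neg h]
          rw [dist_eq_norm, norm_sub_rev]
          exact hdiff (x u)
      · exact hxtc.mono (Set.Icc_subset_Icc hT₁pos.le htb₂)
      · intro u hu
        exact (hxt1 u ⟨lt_of_lt_of_le hT₁pos hu.1, hu.2.le⟩).hasDerivWithinAt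
      · intro u hu
        rw [dist_self]
      · exact h1 T₁ ⟨hT₁pos.le, le_rfl⟩
    -- Bound on the Grönwall bound
    have hgb : ∀ s : ℝ, 0 ≤ s →
        gronwallBound 0 K (μ + 0) s ≤ μ * s * Real.exp (max L₁ L₂ * s) := by
      intro s hs
      rw [add_zero, ← hK]
      unfold gronwallBound
      by_cases hK0 : (K : ℝ) = 0
      · rw [if_pos hK0]
        have h1' : (1 : ℝ) ≤ Real.exp ((K : ℝ) * s) := Real.one_le_exp (by positivity)
        nlinarith [mul_nonneg hμ.le hs]
      · rw [if_neg hK0]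
        have hKpos : 0 < (K : ℝ) := lt_of_le_of_ne K.coe_nonneg (Ne.symm hK0)
        have hep := Real.exp_pos ((K : ℝ) * s)
        have key : Real.exp ((K : ℝ) * s) - 1 ≤ (K : ℝ) * s * Real.exp ((K : ℝ) * s) := by
          have h := Real.add_one_le_exp (-((K : ℝ) * s))
          rw [Real.exp_neg] at h
          have h2 := mul_le_mul_of_nonneg_right h hep.le
          rw [inv_mul_cancel₀ hep.ne'] at h2
          nlinarith [h2]
        have hfin := mul_le_mul_of_nonneg_left key hμ.le
        rw [zero_mul, zero_add, div_mul_eq_mul_div, div_le_iff₀ hKpos]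
        nlinarith [hfin, mul_nonneg (mul_nonneg hμ.le hs) hep.le]
    have h2' : ∀ t ∈ Set.Ioc T₁ tb,
        ‖x t - xt t‖ ≤ μ * (t - T₁) * Real.exp (max L₁ L₂ * (t - T₁)) := by
      intro t ht
      rw [← dist_eq_norm]
      exact (h2 t ⟨ht.1.le, ht.2⟩).trans (hgb (t - T₁) (by linarith [ht.1]))
    have hδ₂ : dist (x tb) (xt tb) ≤ μ * η * Real.exp (max L₁ L₂ * η) := by
      refine ((h2 tb ⟨htb₁, le_rfl⟩).trans (hgb (tb - T₁) (by linarith))).trans ?_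
      have e1 : μ * (tb - T₁) ≤ μ * η := mul_le_mul_of_nonneg_left htbη hμ.le
      have e2 : Real.exp (max L₁ L₂ * (tb - T₁)) ≤ Real.exp (max L₁ L₂ * η) :=
        Real.exp_le_exp.mpr (mul_le_mul_of_nonneg_left htbη hmax)
      exact mul_le_mul e1 e2 (Real.exp_pos _).le (mul_nonneg hμ.le hη.le)
    refine ⟨fun t ht => ?_, h2', fun t ht => ?_⟩
    · rw [← dist_eq_norm]
      exact le_antisymm (h1 t ⟨ht.1.le, ht.2⟩) dist_nonneg
    -- Phase 3
    · rw [← dist_eq_norm]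
      have htbt : tb < t := ht.1
      have key : ∀ s ∈ Set.Ioo tb t,
          dist (x t) (xt t) ≤ dist (x s) (xt s) * Real.exp ((K₂ : ℝ) * (t - s)) := by
        intro s hs
        have := dist_le_of_trajectories_ODE (v := fun _ y => f₂ y) (fun _ => hlip₂)
          (hxc.mono (Set.Icc_subset_Icc (by linarith [hs.1]) ht.2))
          (fun u hu => (hx2 u ⟨by linarith [hs.1, hu.1],
            by linarith [hu.2, ht.2]⟩).hasDerivWithinAt)
          (hxtc.mono (Set.Icc_subset_Icc (by linarith [hs.1]) ht.2))
          (fun u hu => (hxt2 u ⟨lt_of_lt_of_le hs.1 hu.1,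
            le_trans hu.2.le ht.2⟩).hasDerivWithinAt)
          le_rfl
        exact this t ⟨hs.2.le, le_rfl⟩
      have hmem : Set.Ioo tb t ∈ 𝓝[>] tb := Ioo_mem_nhdsGT_of_mem ⟨le_rfl, htbt⟩
      have hle : 𝓝[>] tb ≤ 𝓝[Set.Icc (0 : ℝ) T₂] tb :=
        nhdsWithin_le_iff.mpr (Filter.mem_of_superset hmem
          (fun u hu => ⟨by linarith [hu.1], by linarith [hu.2, ht.2]⟩))
      have htbmem : tb ∈ Set.Icc (0 : ℝ) T₂ := ⟨by linarith, htb₂⟩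
      have hx' : Filter.Tendsto x (𝓝[>] tb) (𝓝 (x tb)) := (hxc tb htbmem).mono_left hle
      have hxt' : Filter.Tendsto xt (𝓝[>] tb) (𝓝 (xt tb)) := (hxtc tb htbmem).mono_left hle
      have hexp : Filter.Tendsto (fun s : ℝ => Real.exp ((K₂ : ℝ) * (t - s)))
          (𝓝[>] tb) (𝓝 (Real.exp ((K₂ : ℝ) * (t - tb)))) :=
        ((Real.continuous_exp.comp
          (continuous_const.mul (continuous_const.sub continuous_id))).tendsto tb).mono_left
          nhdsWithin_le_nhds
      have hlim : dist (x t) (xt t) ≤ dist (x tb) (xt tb) * Real.exp ((K₂ : ℝ) * (t - tb)) :=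
        ge_of_tendsto ((hx'.dist hxt').mul hexp) (Filter.eventually_of_mem hmem key)
      rw [hK₂] at hlim
      calc dist (x t) (xt t) ≤ dist (x tb) (xt tb) * Real.exp (L₂ * (t - tb)) := hlim
        _ ≤ μ * η * Real.exp (max L₁ L₂ * η) * Real.exp (L₂ * (t - tb)) :=
            mul_le_mul_of_nonneg_right hδ₂ (Real.exp_pos _).le
        _ = μ * η * Real.exp (L₂ * (t - tb) + max L₁ L₂ * η) := by
            rw [Real.exp_add]; ring
end

section
/- Let x, x̃ : ℝ → ℝ^d (with the Euclidean norm) and let f₁, f₂ : ℝ^d → ℝ^d be Lipschitz continuous with Lipschitz constants L₁ and L₂ respectively. Assume there are constants μ, η > 0 with ‖f₁(z) − f₂(z)‖ ≤ μ for all z ∈ ℝ^d. Let 0 = T₀ < T₁ < T₂ and 0 < t̆ ≤ T₁ with T₁ − t̆ ≤ η. Suppose x satisfies x(0) = x₀, x′(t) = f₁(x(t)) for t ∈ (0, T₁] and x′(t) = f₂(x(t)) for t ∈ (T₁, T₂], while x̃ satisfies x̃(0) = x₀, x̃′(t) = f₁(x̃(t)) for t ∈ (0, t̆] and x̃′(t)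 = f₂(x̃(t)) for t ∈ (t̆, T₂], and both x and x̃ are continuous on [0, T₂]. Then: ‖x(t) − x̃(t)‖ = 0 for t ∈ (0, t̆]; ‖x(t) − x̃(t)‖ ≤ μ (t − t̆) exp(max(L₁, L₂)(t − t̆)) for t ∈ (t̆, T₁]; and ‖x(t) − x̃(t)‖ ≤ μ η exp(L₂(t − T₁) + max(L₁, L₂) η) for t ∈ (T₁, T₂]. -/
open Set Real Filter Topology

lemma gronwallBound_mono_delta {δ₁ δ₂ K ε x : ℝ} (h : δ₁ ≤ δ₂) :
    gronwallBound δ₁ K ε x ≤ gronwallBound δ₂ K ε x := by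
  by_cases hK : K = 0
  · simp only [gronwallBound, if_pos hK]; linarith
  · simp only [gronwallBound, if_neg hK]
    have := Real.exp_pos (K * x)
    nlinarith

lemma gronwallBound_zero_le {K ε x : ℝ} (hK : 0 ≤ K) (hε : 0 ≤ ε) (hx : 0 ≤ x) :
    gronwallBound 0 K ε x ≤ ε * x * Real.exp (K * x) := by
  by_cases hK0 : K = 0
  · simp [gronwallBound, hK0]
  · have hKpos : 0 < K := lt_of_le_of_ne hK (Ne.symm hK0)
    simp only [gronwallBound, if_neg hK0, zero_mul, zero_add]
    rw [div_mul_eq_mul_div, div_le_iff₀ hKpos]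
    have h1 : -(K * x) + 1 ≤ Real.exp (-(K * x)) := Real.add_one_le_exp _
    have h2 : Real.exp (-(K * x)) * Real.exp (K * x) = 1 := by
      rw [← Real.exp_add]; simp
    have h3 := Real.exp_pos (K * x)
    nlinarith [mul_le_mul_of_nonneg_right h1 h3.le, mul_nonneg hε (mul_nonneg hx h3.le)]

/-- Grönwall with derivative hypotheses only on the open interval. -/
lemma gronwall_Ioo {E : Type*} [NormedAddCommGroup E] [NormedSpace ℝ E]
    {f f' : ℝ → E} {δ K ε : ℝ} {a b : ℝ}
    (hf : ContinuousOn f (Set.Icc a b))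
    (hf' : ∀ t ∈ Set.Ioo a b, HasDerivAt f (f' t) t)
    (ha : ‖f a‖ ≤ δ)
    (bound : ∀ t ∈ Set.Ioo a b, ‖f' t‖ ≤ K * ‖f t‖ + ε) :
    ∀ t ∈ Set.Icc a b, ‖f t‖ ≤ gronwallBound δ K ε (t - a) := by
  intro t ht
  rcases eq_or_lt_of_le ht.1 with rfl | hat
  · simpa [gronwallBound_x0] using ha
  have key : ∀ s ∈ Set.Ioo a t, ‖f t‖ ≤ gronwallBound (‖f s‖) K ε (t - s) := by
    intro s hs
    refine norm_le_gronwallBound_of_norm_deriv_right_le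
      (hf.mono (Set.Icc_subset_Icc hs.1.le ht.2)) (fun u hu => ?_) le_rfl
      (fun u hu => bound u ⟨hs.1.trans_le hu.1, hu.2.trans_le ht.2⟩) t ⟨hs.2.le, le_rfl⟩
    exact (hf' u ⟨hs.1.trans_le hu.1, hu.2.trans_le ht.2⟩).hasDerivWithinAt
  have hne : (𝓝[Set.Ioo a t] a).NeBot := by
    refine mem_closure_iff_nhdsWithin_neBot.1 ?_
    rw [closure_Ioo hat.ne]
    exact ⟨le_rfl, hat.le⟩
  have hfa : ContinuousWithinAt (fun s => ‖f s‖) (Set.Ioo a t) a :=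
    ((hf a ⟨le_rfl, hat.le.trans ht.2⟩).mono
      (fun s hs => ⟨hs.1.le, hs.2.le.trans ht.2⟩)).norm
  have hsub : ContinuousWithinAt (fun s => t - s) (Set.Ioo a t) a :=
    (continuous_const.sub continuous_id).continuousWithinAt
  have hGcont : ContinuousWithinAt (fun s => gronwallBound (‖f s‖) K ε (t - s))
      (Set.Ioo a t) a := by
    by_cases hK : K = 0
    · simp only [gronwallBound, if_pos hK]
      exact hfa.add (continuousWithinAt_const.mul hsub)
    · simp only [gronwallBound, if_neg hK]
      have hexp : ContinuousWithinAt (fun s => Real.exp (K * (t - s))) (Set.Ioo a t) a :=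
        (Real.continuous_exp.comp (continuous_const.mul
          (continuous_const.sub continuous_id))).continuousWithinAt
      exact (hfa.mul hexp).add
        (continuousWithinAt_const.mul (hexp.sub continuousWithinAt_const))
  have hlim : ‖f t‖ ≤ gronwallBound (‖f a‖) K ε (t - a) := by
    refine ge_of_tendsto hGcont ?_
    filter_upwards [self_mem_nhdsWithin] with s hs using key s hs
  exact hlim.trans (gronwallBound_mono_delta ha)

/-- Proposition 1 (case t̆ ≤ T₁): comparison between the true switched system `x`
(switching from `f₁` to `f₂` at time `T₁`) and the auxiliary system `xt`
(switching at the approximate switching time `tb ≤ T₁`). -/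
theorem switched_system_auxiliary_comparison_early
    {d : ℕ}
    (f₁ f₂ : EuclideanSpace ℝ (Fin d) → EuclideanSpace ℝ (Fin d))
    (x xt : ℝ → EuclideanSpace ℝ (Fin d))
    (x₀ : EuclideanSpace ℝ (Fin d))
    (L₁ L₂ μ η T₁ T₂ tb : ℝ)
    (hf₁ : ∀ a b, ‖f₁ a - f₁ b‖ ≤ L₁ * ‖a - b‖)
    (hf₂ : ∀ a b, ‖f₂ a - f₂ b‖ ≤ L₂ * ‖a - b‖)
    (hμ : 0 < μ) (hη : 0 < η)
    (hdiff : ∀ z, ‖f₁ z - f₂ z‖ ≤ μ)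
    (hT₁pos : 0 < T₁) (hT₁₂ : T₁ < T₂)
    (htbpos : 0 < tb) (htb₁ : tb ≤ T₁) (htbη : T₁ - tb ≤ η)
    (hx0 : x 0 = x₀) (hxt0 : xt 0 = x₀)
    (hx1 : ∀ t ∈ Set.Ioc (0 : ℝ) T₁, HasDerivAt x (f₁ (x t)) t)
    (hx2 : ∀ t ∈ Set.Ioc T₁ T₂, HasDerivAt x (f₂ (x t)) t)
    (hxt1 : ∀ t ∈ Set.Ioc (0 : ℝ) tb, HasDerivAt xt (f₁ (xt t)) t)
    (hxt2 : ∀ t ∈ Set.Ioc tb T₂, HasDerivAt xt (f₂ (xt t)) t)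
    (hxc : ContinuousOn x (Set.Icc 0 T₂))
    (hxtc : ContinuousOn xt (Set.Icc 0 T₂)) :
    (∀ t ∈ Set.Ioc (0 : ℝ) tb, ‖x t - xt t‖ = 0) ∧
    (∀ t ∈ Set.Ioc tb T₁,
      ‖x t - xt t‖ ≤ μ * (t - tb) * Real.exp (max L₁ L₂ * (t - tb))) ∧
    (∀ t ∈ Set.Ioc T₁ T₂,
      ‖x t - xt t‖ ≤ μ * η * Real.exp (L₂ * (t - T₁) + max L₁ L₂ * η)) := by
  rcases Nat.eq_zero_or_pos d with rfl | hd
  · -- dimension 0 : everything is trivially zero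
    have hsub : ∀ t : ℝ, x t - xt t = 0 := fun t => PiLp.ext fun i => i.elim0
    refine ⟨fun t _ => by rw [hsub, norm_zero],
      fun t ht => ?_, fun t _ => ?_⟩
    · rw [hsub, norm_zero]
      have h1 : (0:ℝ) ≤ t - tb := by linarith [ht.1]
      exact mul_nonneg (mul_nonneg hμ.le h1) (Real.exp_pos _).le
    · rw [hsub, norm_zero]
      exact mul_nonneg (mul_nonneg hμ.le hη.le) (Real.exp_pos _).le
  -- main case: d > 0, so L₁ L₂ ≥ 0
  set K : ℝ := max L₁ L₂ with hKdef
  have hnorm1 : ‖(EuclideanSpace.single (⟨0, hd⟩ : Fin d) (1:ℝ)) - 0‖ = 1 := by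
    rw [sub_zero, EuclideanSpace.norm_single]; norm_num
  have hL₁ : 0 ≤ L₁ := by
    have h := hf₁ (EuclideanSpace.single (⟨0, hd⟩ : Fin d) (1:ℝ)) 0
    rw [hnorm1, mul_one] at h
    exact le_trans (norm_nonneg _) h
  have hL₂ : 0 ≤ L₂ := by
    have h := hf₂ (EuclideanSpace.single (⟨0, hd⟩ : Fin d) (1:ℝ)) 0
    rw [hnorm1, mul_one] at h
    exact le_trans (norm_nonneg _) h
  have hK : 0 ≤ K := le_trans hL₁ (le_max_left _ _)
  -- Part 1
  have hsub1 : Set.Icc (0:ℝ) tb ⊆ Set.Icc 0 T₂ := Set.Icc_subset_Icc le_rfl (by linarith)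
  have part1' : ∀ t ∈ Set.Icc (0:ℝ) tb,
      ‖x t - xt t‖ ≤ gronwallBound 0 L₁ 0 (t - 0) := by
    refine gronwall_Ioo (f' := fun t => f₁ (x t) - f₁ (xt t)) ((hxc.mono hsub1).sub (hxtc.mono hsub1)) (fun t ht => ?_)
      (by rw [hx0, hxt0, sub_self, norm_zero]) (fun t ht => ?_)
    · exact (hx1 t ⟨ht.1, ht.2.le.trans htb₁⟩).sub (hxt1 t ⟨ht.1, ht.2.le⟩)
    · simpa using hf₁ (x t) (xt t)
  have part1 : ∀ t ∈ Set.Ioc (0:ℝ) tb, ‖x t - xt t‖ = 0 := by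
    intro t ht
    have h := part1' t ⟨ht.1.le, ht.2⟩
    rw [gronwallBound_ε0_δ0] at h
    exact le_antisymm h (norm_nonneg _)
  have htbeq : x tb - xt tb = 0 := norm_eq_zero.1 (part1 tb ⟨htbpos, le_rfl⟩)
  -- Part 2
  have hsub2 : Set.Icc tb T₁ ⊆ Set.Icc 0 T₂ :=
    Set.Icc_subset_Icc htbpos.le (by linarith)
  have part2' : ∀ t ∈ Set.Icc tb T₁,
      ‖x t - xt t‖ ≤ gronwallBound 0 K μ (t - tb) := by
    refine gronwall_Ioo (f' := fun t => f₁ (x t) - f₂ (xt t)) ((hxc.mono hsub2).sub (hxtc.mono hsub2)) (fun t ht => ?_)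
      (by rw [htbeq, norm_zero]) (fun t ht => ?_)
    · exact (hx1 t ⟨htbpos.trans ht.1, ht.2.le⟩).sub
        (hxt2 t ⟨ht.1, by linarith [ht.2]⟩)
    · calc ‖f₁ (x t) - f₂ (xt t)‖
          ≤ ‖f₁ (x t) - f₁ (xt t)‖ + ‖f₁ (xt t) - f₂ (xt t)‖ := by
            have he : f₁ (x t) - f₂ (xt t)
                = (f₁ (x t) - f₁ (xt t)) + (f₁ (xt t) - f₂ (xt t)) := by abel
            rw [he]; exact norm_add_le _ _
        _ ≤ L₁ * ‖x t - xt t‖ + μ := add_le_add (hf₁ _ _) (hdiff _)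
        _ ≤ K * ‖x t - xt t‖ + μ := by
            have h0 := norm_nonneg (x t - xt t)
            have h1 : L₁ ≤ K := le_max_left _ _
            nlinarith
  have part2 : ∀ t ∈ Set.Ioc tb T₁,
      ‖x t - xt t‖ ≤ μ * (t - tb) * Real.exp (K * (t - tb)) := by
    intro t ht
    exact (part2' t ⟨ht.1.le, ht.2⟩).trans
      (gronwallBound_zero_le hK hμ.le (by linarith [ht.1]))
  -- Part 3
  have hδ : ‖x T₁ - xt T₁‖ ≤ μ * η * Real.exp (K * η) := by
    have h1 := (part2' T₁ ⟨htb₁, le_rfl⟩).trans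
      (gronwallBound_zero_le hK hμ.le (by linarith))
    have h2 : Real.exp (K * (T₁ - tb)) ≤ Real.exp (K * η) :=
      Real.exp_le_exp.2 (mul_le_mul_of_nonneg_left htbη hK)
    have h3 : μ * (T₁ - tb) ≤ μ * η := mul_le_mul_of_nonneg_left htbη hμ.le
    exact h1.trans (mul_le_mul h3 h2 (Real.exp_pos _).le
      (mul_nonneg hμ.le hη.le))
  have hsub3 : Set.Icc T₁ T₂ ⊆ Set.Icc 0 T₂ :=
    Set.Icc_subset_Icc hT₁pos.le le_rfl
  have part3' : ∀ t ∈ Set.Icc T₁ T₂,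
      ‖x t - xt t‖ ≤ gronwallBound (μ * η * Real.exp (K * η)) L₂ 0 (t - T₁) := by
    refine gronwall_Ioo (f' := fun t => f₂ (x t) - f₂ (xt t)) ((hxc.mono hsub3).sub (hxtc.mono hsub3)) (fun t ht => ?_)
      hδ (fun t ht => ?_)
    · exact (hx2 t ⟨ht.1, ht.2.le⟩).sub
        (hxt2 t ⟨lt_of_le_of_lt htb₁ ht.1, ht.2.le⟩)
    · simpa using hf₂ (x t) (xt t)
  refine ⟨part1, part2, fun t ht => ?_⟩
  have h := part3' t ⟨ht.1.le, ht.2⟩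
  rw [gronwallBound_ε0] at h
  calc ‖x t - xt t‖ ≤ μ * η * Real.exp (K * η) * Real.exp (L₂ * (t - T₁)) := h
    _ = μ * η * Real.exp (L₂ * (t - T₁) + K * η) := by rw [Real.exp_add]; ring
end
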